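/- In any finite binary tree labeled with 'finalized'/'unfinalized' such that every finalized node has at least one subtree entirely finalized, if the number of type-0 unfinalized nodes is at most a and the number of type-1 unfinalized nodes is at most b, then the total number of unfinalized nodes in the tree is at most 2a + b. -/
import Mathlib


/-- A finite binary tree with node labels of type `α`. -/
inductive BTree (α : Type) : Type where
  | leaf : BTree α
  | node : BTree α → α → BTree α → BTree α

namespace BTree

/-- Node label `true` means "finalized", `false` means "unfinalized".
`hasUnfin t` says the tree `t` contains at least one unfinalized node. -/
def hasUnfin : BTree Bool → Bool
  | leaf => false
  | node l b r => !b || hasUnfin l || hasUnfin r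

/-- The labeling invariant: every finalized node has at least one of its two
subtrees consisting entirely of finalized nodes. -/
def good : BTree Bool → Prop
  | leaf => True
  | node l b r =>
      (b = true → hasUnfin l = false ∨ hasUnfin r = false) ∧ good l ∧ good r

/-- Number of type-0 nodes: unfinalized nodes neither of whose subtrees
contains an unfinalized node. -/
def type0Count : BTree Bool → ℕ
  | leaf => 0
  | node l b r =>
      type0Count l + type0Count r +
        (if b = false ∧ hasUnfin l = false ∧ hasUnfin r = false then 1 else 0)

/-- Number of type-1 nodes: unfinalized nodes exactly one of whose subtrees
contains an unfinalized node. -/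
def type1Count : BTree Bool → ℕ
  | leaf => 0
  | node l b r =>
      type1Count l + type1Count r +
        (if b = false ∧ hasUnfin l ≠ hasUnfin r then 1 else 0)

/-- Total number of unfinalized nodes. -/
def unfinCount : BTree Bool → ℕ
  | leaf => 0
  | node l b r => unfinCount l + unfinCount r + (if b = false then 1 else 0)

end BTree

open BTree in
lemma unfinCount_key (t : BTree Bool) :
    unfinCount t + (if hasUnfin t then 1 else 0) ≤
      2 * type0Count t + type1Count t := by
  induction t with
  | leaf => simp [unfinCount, hasUnfin, type0Count, type1Count]
  | node l b r ihl ihr =>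
    simp only [unfinCount, hasUnfin, type0Count, type1Count]
    rcases Bool.eq_false_or_eq_true (hasUnfin l) with hl | hl <;>
      rcases Bool.eq_false_or_eq_true (hasUnfin r) with hr | hr <;>
      cases b <;> simp [hl, hr] at ihl ihr ⊢ <;> omega

open BTree in
/-- If every finalized node has a fully finalized subtree, and the number of
type-0 unfinalized nodes is at most `a` and the number of type-1 unfinalized
nodes is at most `b`, then the total number of unfinalized nodes is at most
`2 * a + b`. -/
theorem unfinCount_le (t : BTree Bool) (a b : ℕ) (hgood : good t)
    (h0 : type0Count t ≤ a) (h1 : type1Count t ≤ b) :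
    unfinCount t ≤ 2 * a + b := by
  have := unfinCount_key t
  omega
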